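/- Let q be a prime power, K a finite field with q elements, L a degree-2 field extension of K, ℓ an odd prime dividing q+1, η ∈ L with η^(q+1) = 1 and η^((q+1)/ℓ) ≠ 1, and α ∈ K with algebraMap K L α = η + η⁻¹. Let Ω be an algebraically closed field containing L. Then for every i ≥ 0, the set of roots in Ω of the polynomial P_{ℓ^i} − C α ∈ K[X] is exactly { μ + μ⁻¹ : μ ∈ Ω, μ^(ℓ^i) = η }, and this root set has exactly ℓ^i elements (so P_{ℓ^i} − C α is squarefree). -/

import Mathlib

open Polynomial

private lemma add_inv_dichotomy {F : Type*} [Field F] {a b : F} (ha : a ≠ 0) (hb : b ≠ 0)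
    (h : a + a⁻¹ = b + b⁻¹) : a = b ∨ a = b⁻¹ := by
  have h1 : a * a⁻¹ = 1 := mul_inv_cancel₀ ha
  have h2 : b * b⁻¹ = 1 := mul_inv_cancel₀ hb
  have h3 : a * b * (a + a⁻¹) = a * b * (b + b⁻¹) := by rw [h]
  have key : (a - b) * (a * b - 1) = 0 := by linear_combination h3 - b * h1 + a * h2
  rcases mul_eq_zero.mp key with h' | h'
  · exact Or.inl (sub_eq_zero.mp h')
  · exact Or.inr (eq_inv_of_mul_eq_one_left (sub_eq_zero.mp h'))

/-- with `q, K, L, ℓ, η, α` as in the quasi-cyclotomic `T₂` construction and `Ω` an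
algebraically closed field containing `L`, for every `i ≥ 0` the set of roots in `Ω` of
`P_{ℓ^i} - C α ∈ K[X]` is exactly `{ μ + μ⁻¹ : μ ∈ Ω, μ ^ (ℓ^i) = η }`, and this root set has
exactly `ℓ^i` elements (so `P_{ℓ^i} - C α` is squarefree). -/
theorem rootSet_dickson_sub_C
    (q ℓ : ℕ) (hq : IsPrimePow q)
    (K L Ω : Type*) [Field K] [Fintype K] [Field L] [Algebra K L]
    [Field Ω] [IsAlgClosed Ω] [Algebra L Ω] [Algebra K Ω] [IsScalarTower K L Ω]
    (hcard : Fintype.card K = q) (hKL : Module.finrank K L = 2)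
    (hℓ : ℓ.Prime) (hℓodd : Odd ℓ) (hℓdvd : ℓ ∣ q + 1)
    (η : L) (hη1 : η ^ (q + 1) = 1) (hη2 : η ^ ((q + 1) / ℓ) ≠ 1)
    (α : K) (hα : algebraMap K L α = η + η⁻¹) :
    ∀ i : ℕ,
      (dickson 1 (1 : K) (ℓ ^ i) - C α).rootSet Ω
          = {x : Ω | ∃ μ : Ω, μ ^ ℓ ^ i = algebraMap L Ω η ∧ x = μ + μ⁻¹} ∧
      ((dickson 1 (1 : K) (ℓ ^ i) - C α).rootSet Ω).ncard = ℓ ^ i := by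
  intro i
  classical
  set n : ℕ := ℓ ^ i with hndef
  have hn0 : 0 < n := pow_pos hℓ.pos i
  have hq1 : q + 1 ≠ 0 := Nat.succ_ne_zero q
  -- η is nonzero and η ≠ 1
  have hηne1 : η ≠ 1 := by
    intro h; exact hη2 (by rw [h, one_pow])
  have hη0 : η ≠ 0 := by
    intro h; rw [h, zero_pow hq1] at hη1; exact zero_ne_one hη1
  -- η^2 ≠ 1
  have hηsq : η ^ 2 ≠ 1 := by
    intro h
    have h' : η = 1 ∨ η = -1 := mul_self_eq_one_iff.mp (by rw [← sq]; exact h)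
    rcases h' with h' | h'
    · exact hηne1 h'
    by_cases h21 : (-1 : L) = 1
    · exact hηne1 (h'.trans h21)
    -- η = -1, so q+1 is even, hence (q+1)/ℓ is even
    have heven : Even (q + 1) := by
      rw [h'] at hη1
      exact (neg_one_pow_eq_one_iff_even h21).mp hη1
    have hcop : Nat.Coprime 2 ℓ :=
      (Nat.prime_two.coprime_iff_not_dvd).mpr (by
        exact Nat.two_dvd_ne_zero.mpr (Nat.odd_iff.mp hℓodd))
    have hmul : ℓ * ((q + 1) / ℓ) = q + 1 := Nat.mul_div_cancel' hℓdvd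
    have h2dvd : 2 ∣ (q + 1) / ℓ := by
      refine hcop.dvd_of_dvd_mul_left ?_
      rw [hmul]; exact heven.two_dvd
    obtain ⟨m, hm⟩ := h2dvd
    apply hη2
    rw [h', hm, pow_mul, neg_one_sq, one_pow]
  -- pass to Ω
  have hinj : Function.Injective (algebraMap L Ω) := (algebraMap L Ω).injective
  set η' : Ω := algebraMap L Ω η with hη'def
  have hη'0 : η' ≠ 0 := fun h => hη0 (hinj (by rw [← hη'def, h, map_zero]))
  have hη'sq : η' ^ 2 ≠ 1 := fun h => hηsq (hinj (by rw [map_pow, map_one, ← hη'def]; exact h))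
  have hα' : algebraMap K Ω α = η' + η'⁻¹ := by
    rw [IsScalarTower.algebraMap_apply K L Ω, hα, map_add, map_inv₀, ← hη'def]
  -- the polynomial is nonzero
  have hp0 : dickson 1 (1 : K) n - C α ≠ 0 := by
    intro h
    have hd : dickson 1 (1 : K) n = C α := sub_eq_zero.mp h
    have hα2 : α = 2 := by
      have h2 : (dickson 1 (1 : K) n).eval ((1 : K) + 1) = 1 ^ n + 1 ^ n :=
        dickson_one_one_eval_add_inv 1 1 (by rw [mul_one]) n
      rw [hd, eval_C, one_pow] at h2
      rw [h2]; norm_num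
    have : η + η⁻¹ = 2 := by
      rw [← hα, hα2, map_ofNat]
    have hquad : (η - 1) ^ 2 = 0 := by
      have hmul : η * (η + η⁻¹) = η * 2 := by rw [this]
      have h1 : η * η⁻¹ = 1 := mul_inv_cancel₀ hη0
      linear_combination hmul - h1
    have h0 : η - 1 = 0 := pow_eq_zero_iff (two_ne_zero) |>.mp hquad
    exact hηne1 (sub_eq_zero.mp h0)
  -- characteristic facts
  obtain ⟨p, hcharK⟩ := CharP.exists K
  obtain ⟨k, hp, hqpk⟩ := FiniteField.card K p
  have hℓnep : ℓ ≠ p := by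
    rintro rfl
    have hdvdq : ℓ ∣ q := by rw [hcard] at hqpk; rw [hqpk]; exact dvd_pow_self ℓ k.ne_zero
    have h1 : ℓ ∣ 1 := by
      have h2 := Nat.dvd_sub hℓdvd hdvdq
      simpa using h2
    exact hℓ.one_lt.ne' (Nat.dvd_one.mp h1)
  have hcharΩ : CharP Ω p := charP_of_injective_algebraMap (algebraMap K Ω).injective p
  have hℓΩ : (ℓ : Ω) ≠ 0 := by
    intro h
    have : p ∣ ℓ := (CharP.cast_eq_zero_iff Ω p ℓ).mp h
    exact hℓnep ((Nat.prime_dvd_prime_iff_eq hp hℓ).mp this).symm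
  have hnΩ : (n : Ω) ≠ 0 := by
    rw [hndef, Nat.cast_pow]; exact pow_ne_zero i hℓΩ
  -- membership characterization
  have hmem : ∀ x : Ω, x ∈ (dickson 1 (1 : K) n - C α).rootSet Ω ↔
      (dickson 1 (1 : Ω) n).eval x = η' + η'⁻¹ := by
    intro x
    rw [mem_rootSet, and_iff_right hp0]
    have : (aeval x) (dickson 1 (1 : K) n - C α)
        = (dickson 1 (1 : Ω) n).eval x - (η' + η'⁻¹) := by
      rw [aeval_def, ← eval_map, Polynomial.map_sub, map_dickson, map_one, map_C, eval_sub,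
        eval_C, hα']
    rw [this, sub_eq_zero]
  have hevalD : ∀ μ : Ω, μ ≠ 0 → (dickson 1 (1 : Ω) n).eval (μ + μ⁻¹) = μ ^ n + (μ ^ n)⁻¹ := by
    intro μ hμ
    rw [dickson_one_one_eval_add_inv μ μ⁻¹ (mul_inv_cancel₀ hμ) n, inv_pow]
  -- the set equality
  have hset : (dickson 1 (1 : K) n - C α).rootSet Ω
      = {x : Ω | ∃ μ : Ω, μ ^ n = η' ∧ x = μ + μ⁻¹} := by
    ext x
    rw [hmem x, Set.mem_setOf_eq]
    constructor
    · intro hx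
      obtain ⟨μ, hμ⟩ : ∃ μ : Ω, μ ^ 2 - x * μ + 1 = 0 := by
        have he : (X ^ 2 - C x * X + C 1 : Polynomial Ω) = C 1 * X ^ 2 + C (-x) * X + C 1 := by
          simp only [map_neg, map_one]; ring
        have hdeg : (X ^ 2 - C x * X + C 1 : Polynomial Ω).degree = 2 := by
          rw [he, degree_quadratic one_ne_zero]
        obtain ⟨μ, hμ⟩ := IsAlgClosed.exists_root (X ^ 2 - C x * X + C 1 : Polynomial Ω)
          (by rw [hdeg]; decide)
        exact ⟨μ, by simpa [IsRoot] using hμ⟩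
      have hμ0 : μ ≠ 0 := by rintro rfl; simp at hμ
      have hxval : x = μ + μ⁻¹ := by
        field_simp
        linear_combination -hμ
      rw [hxval, hevalD μ hμ0] at hx
      rcases add_inv_dichotomy (pow_ne_zero n hμ0) hη'0 hx with h | h
      · exact ⟨μ, h, hxval⟩
      · refine ⟨μ⁻¹, ?_, by rw [hxval, inv_inv, add_comm]⟩
        rw [inv_pow, h, inv_inv]
    · rintro ⟨μ, hμn, rfl⟩
      have hμ0 : μ ≠ 0 := by
        rintro rfl
        rw [zero_pow hn0.ne'] at hμn
        exact hη'0 hμn.symm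
      rw [hevalD μ hμ0, hμn]
  refine ⟨hset, ?_⟩
  rw [hset]
  -- cardinality
  have himg : {x : Ω | ∃ μ : Ω, μ ^ n = η' ∧ x = μ + μ⁻¹}
      = (fun μ : Ω => μ + μ⁻¹) '' {μ : Ω | μ ^ n = η'} := by
    ext x
    simp only [Set.mem_image, Set.mem_setOf_eq]
    exact exists_congr fun μ => and_congr_right fun _ => eq_comm
  have hinjOn : Set.InjOn (fun μ : Ω => μ + μ⁻¹) {μ : Ω | μ ^ n = η'} := by
    intro μ hμ ν hν h
    have hμ0 : μ ≠ 0 := by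
      rintro rfl; rw [Set.mem_setOf_eq, zero_pow hn0.ne'] at hμ; exact hη'0 hμ.symm
    have hν0 : ν ≠ 0 := by
      rintro rfl; rw [Set.mem_setOf_eq, zero_pow hn0.ne'] at hν; exact hη'0 hν.symm
    rcases add_inv_dichotomy hμ0 hν0 h with h' | h'
    · exact h'
    exfalso
    apply hη'sq
    rw [Set.mem_setOf_eq] at hμ hν
    rw [sq]
    nth_rewrite 1 [← hμ]
    nth_rewrite 1 [← hν]
    rw [h', inv_pow, mul_comm, mul_inv_cancel₀ (pow_ne_zero n hν0)]
  rw [himg, Set.ncard_image_of_injOn hinjOn]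
  have hSfin : {μ : Ω | μ ^ n = η'} = ↑((nthRoots n η').toFinset) := by
    ext μ
    simp only [Set.mem_setOf_eq, Finset.coe_sort_coe, Finset.mem_coe, Multiset.mem_toFinset,
      mem_nthRoots hn0]
  rw [hSfin, Set.ncard_coe_finset]
  have hsep : ((X : Polynomial Ω) ^ n - C η').Separable := separable_X_pow_sub_C η' hnΩ hη'0
  have hnodup : (nthRoots n η').Nodup := nodup_roots hsep
  rw [Multiset.toFinset_card_of_nodup hnodup]
  have hsplit : Splits ((X : Polynomial Ω) ^ n - C η') := IsAlgClosed.splits _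
  have := splits_iff_card_roots.mp hsplit
  rw [natDegree_X_pow_sub_C] at this
  exact this
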